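/- If 3 ≤ q ≤ 4 then for all real t ≥ -1, (1+t)^q ≤ 1 + q·t + (1/2)·q·(q-1)·t² + (1/6)·q·(q-1)·(q-2)·t³ + |t|^q. -/

import Mathlib

open Set NNReal

lemma myIdDeriv {x : ℝ} : HasDerivAt (fun y : ℝ => y) 1 x := hasDerivAt_id' x

/-- Subadditivity of `x ^ p` for `p ∈ [0,1]`. -/
lemma my_rpow_subadd {p a b : ℝ} (hp0 : 0 ≤ p) (hp1 : p ≤ 1) (ha : 0 ≤ a) (hb : 0 ≤ b) :
    (a + b) ^ p ≤ a ^ p + b ^ p := by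
  have := NNReal.rpow_add_le_add_rpow (⟨a, ha⟩ : ℝ≥0) (⟨b, hb⟩ : ℝ≥0) hp0 hp1
  have h2 := NNReal.coe_le_coe.2 this
  push_cast [NNReal.coe_rpow] at h2
  exact h2

lemma nonneg_of_deriv_Ici {F F' : ℝ → ℝ} (hc : ContinuousOn F (Set.Ici 0))
    (hd : ∀ x ∈ Set.Ioi (0:ℝ), HasDerivAt F (F' x) x)
    (hpos : ∀ x ∈ Set.Ioi (0:ℝ), 0 ≤ F' x) (h0 : F 0 = 0) {x : ℝ} (hx : 0 ≤ x) : 0 ≤ F x := by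
  have mono : MonotoneOn F (Set.Ici 0) := by
    apply monotoneOn_of_deriv_nonneg (convex_Ici 0) hc
    · intro y hy
      rw [interior_Ici] at hy
      exact (hd y hy).differentiableAt.differentiableWithinAt
    · intro y hy
      rw [interior_Ici] at hy
      rw [(hd y hy).deriv]
      exact hpos y hy
  have := mono Set.self_mem_Ici hx hx
  linarith [h0 ▸ this]

lemma nonneg_of_deriv_Icc {F F' : ℝ → ℝ} (hc : ContinuousOn F (Set.Icc 0 1))
    (hd : ∀ x ∈ Set.Ioo (0:ℝ) 1, HasDerivAt F (F' x) x)
    (hpos : ∀ x ∈ Set.Ioo (0:ℝ) 1, 0 ≤ F' x) (h0 : F 0 = 0) {x : ℝ}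
    (hx : x ∈ Set.Icc (0:ℝ) 1) : 0 ≤ F x := by
  have mono : MonotoneOn F (Set.Icc 0 1) := by
    apply monotoneOn_of_deriv_nonneg (convex_Icc 0 1) hc
    · intro y hy
      rw [interior_Icc] at hy
      exact (hd y hy).differentiableAt.differentiableWithinAt
    · intro y hy
      rw [interior_Icc] at hy
      rw [(hd y hy).deriv]
      exact hpos y hy
  have := mono (Set.left_mem_Icc.2 zero_le_one) hx hx.1
  linarith [h0 ▸ this]

lemma lemB {α : ℝ} (h1 : 1 ≤ α) (h2 : α ≤ 2) {t : ℝ} (ht : 0 ≤ t) :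
    (1 + t) ^ α ≤ 1 + α * t + t ^ α := by
  have hα0 : (0:ℝ) < α := by linarith
  suffices h : 0 ≤ 1 + α * t + t ^ α - (1 + t) ^ α by linarith
  refine nonneg_of_deriv_Ici (F := fun x : ℝ => 1 + α * x + x ^ α - (1 + x) ^ α)
    (F' := fun x => α + α * x ^ (α - 1) - α * (1 + x) ^ (α - 1)) ?_ ?_ ?_ ?_ ht
  · intro x _
    apply ContinuousAt.continuousWithinAt
    have ca : ContinuousAt (fun x : ℝ => x ^ α) x :=
      Real.continuousAt_rpow_const x α (Or.inr hα0.le)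
    have cb : ContinuousAt (fun x : ℝ => (1 + x) ^ α) x := by
      have h : ContinuousAt (fun y : ℝ => y ^ α) (1 + x) :=
        Real.continuousAt_rpow_const _ α (Or.inr hα0.le)
      exact h.comp (by fun_prop)
    exact ((continuousAt_const.add (continuousAt_const.mul continuousAt_id)).add ca).sub cb
  · intro x _
    have d1 : HasDerivAt (fun x : ℝ => x ^ α) (α * x ^ (α - 1)) x :=
      Real.hasDerivAt_rpow_const (Or.inr h1)
    have d2 : HasDerivAt (fun x : ℝ => (1 + x) ^ α) (1 * α * (1 + x) ^ (α - 1)) x :=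
      (myIdDeriv.const_add 1).rpow_const (Or.inr h1)
    have h := (((hasDerivAt_const x (1:ℝ)).add (myIdDeriv.const_mul α)).add d1).sub d2
    exact h.congr_deriv (by ring)
  · intro x hx
    have sub : ((1:ℝ) + x) ^ (α - 1) ≤ 1 ^ (α - 1) + x ^ (α - 1) :=
      my_rpow_subadd (by linarith) (by linarith) zero_le_one (le_of_lt hx)
    rw [Real.one_rpow] at sub
    nlinarith
  · simp [Real.zero_rpow hα0.ne', Real.one_rpow]

lemma lemB' {α : ℝ} (h1 : 1 ≤ α) (h2 : α ≤ 2) {s : ℝ} (hs : s ∈ Set.Icc (0:ℝ) 1) :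
    α * s + (1 - s) ^ α ≤ 1 + s ^ α := by
  have hα0 : (0:ℝ) < α := by linarith
  suffices h : 0 ≤ 1 + s ^ α - α * s - (1 - s) ^ α by linarith
  refine nonneg_of_deriv_Icc (F := fun x : ℝ => 1 + x ^ α - α * x - (1 - x) ^ α)
    (F' := fun x => α * x ^ (α - 1) - α + α * (1 - x) ^ (α - 1)) ?_ ?_ ?_ ?_ hs
  · intro x _
    apply ContinuousAt.continuousWithinAt
    have ca : ContinuousAt (fun x : ℝ => x ^ α) x :=
      Real.continuousAt_rpow_const x α (Or.inr hα0.le)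
    have cb : ContinuousAt (fun x : ℝ => (1 - x) ^ α) x := by
      have h : ContinuousAt (fun y : ℝ => y ^ α) (1 - x) :=
        Real.continuousAt_rpow_const _ α (Or.inr hα0.le)
      exact h.comp (by fun_prop)
    exact ((continuousAt_const.add ca).sub (continuousAt_const.mul continuousAt_id)).sub cb
  · intro x _
    have d1 : HasDerivAt (fun x : ℝ => x ^ α) (α * x ^ (α - 1)) x :=
      Real.hasDerivAt_rpow_const (Or.inr h1)
    have d2 : HasDerivAt (fun x : ℝ => (1 - x) ^ α) ((0 - 1) * α * (1 - x) ^ (α - 1)) x :=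
      ((hasDerivAt_const x (1:ℝ)).sub myIdDeriv).rpow_const (Or.inr h1)
    have h := (((hasDerivAt_const x (1:ℝ)).add d1).sub (myIdDeriv.const_mul α)).sub d2
    exact h.congr_deriv (by ring)
  · intro x hx
    have sub : ((x : ℝ) + (1 - x)) ^ (α - 1) ≤ x ^ (α - 1) + (1 - x) ^ (α - 1) :=
      my_rpow_subadd (by linarith) (by linarith) hx.1.le (by linarith [hx.2])
    rw [show (x : ℝ) + (1 - x) = (1:ℝ) by ring, Real.one_rpow] at sub
    nlinarith
  · simp [Real.zero_rpow hα0.ne', Real.one_rpow]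

lemma lemP {q : ℝ} (hq3 : 3 ≤ q) (hq4 : q ≤ 4) {t : ℝ} (ht : 0 ≤ t) :
    (1 + t) ^ q ≤ 1 + q * t + q * (q - 1) / 2 * t ^ 2 + q * (q - 1) * (q - 2) / 6 * t ^ 3
      + t ^ q := by
  have hq1 : (1:ℝ) ≤ q - 1 := by linarith
  have e21 : q - 1 - 1 = q - 2 := by ring
  -- step A : F1 ≥ 0 on Ici 0
  have stepA : ∀ x : ℝ, 0 ≤ x →
      0 ≤ q + q * (q - 1) * x + q * (q - 1) * (q - 2) / 2 * x ^ 2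
        + q * x ^ (q - 1) - q * (1 + x) ^ (q - 1) := by
    intro x hx
    refine nonneg_of_deriv_Ici (F := fun x : ℝ => q + q * (q - 1) * x
        + q * (q - 1) * (q - 2) / 2 * x ^ 2 + q * x ^ (q - 1) - q * (1 + x) ^ (q - 1))
      (F' := fun x => q * (q - 1) + q * (q - 1) * (q - 2) * x
        + q * (q - 1) * x ^ (q - 2) - q * (q - 1) * (1 + x) ^ (q - 2)) ?_ ?_ ?_ ?_ hx
    · intro y _
      apply ContinuousAt.continuousWithinAt
      have ca : ContinuousAt (fun y : ℝ => y ^ (q - 1)) y :=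
        Real.continuousAt_rpow_const y (q - 1) (Or.inr (by linarith))
      have cb : ContinuousAt (fun y : ℝ => (1 + y) ^ (q - 1)) y := by
        have h : ContinuousAt (fun z : ℝ => z ^ (q - 1)) (1 + y) :=
          Real.continuousAt_rpow_const _ (q - 1) (Or.inr (by linarith))
        exact h.comp (by fun_prop)
      exact (((continuousAt_const.add (continuousAt_const.mul continuousAt_id)).add
        (continuousAt_const.mul (continuousAt_id.pow 2))).add
        (continuousAt_const.mul ca)).sub (continuousAt_const.mul cb)
    · intro y _
      have d1 : HasDerivAt (fun y : ℝ => y ^ (q - 1)) ((q - 1) * y ^ (q - 2)) y := by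
        have := Real.hasDerivAt_rpow_const (x := y) (p := q - 1) (Or.inr hq1)
        rwa [e21] at this
      have d2 : HasDerivAt (fun y : ℝ => (1 + y) ^ (q - 1))
          (1 * (q - 1) * (1 + y) ^ (q - 2)) y := by
        have := ((myIdDeriv (x := y)).const_add 1).rpow_const (p := q - 1) (Or.inr hq1)
        rwa [e21] at this
      have hsq : HasDerivAt (fun y : ℝ => y ^ 2) (2 * y) y := by
        simpa using hasDerivAt_pow 2 y
      have h := ((((hasDerivAt_const y q).add (myIdDeriv.const_mul (q * (q - 1)))).add
        (hsq.const_mul (q * (q - 1) * (q - 2) / 2))).add (d1.const_mul q)).sub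
        (d2.const_mul q)
      exact h.congr_deriv (by ring)
    · intro y hy
      have hB := lemB (α := q - 2) (by linarith) (by linarith) (le_of_lt hy)
      have hqq : 0 ≤ q * (q - 1) := by nlinarith
      nlinarith [mul_nonneg hqq (sub_nonneg.2 hB)]
    · simp [Real.zero_rpow (show q - 1 ≠ 0 by intro h; nlinarith), Real.one_rpow]
  -- step B : main
  suffices h : 0 ≤ 1 + q * t + q * (q - 1) / 2 * t ^ 2 + q * (q - 1) * (q - 2) / 6 * t ^ 3
      + t ^ q - (1 + t) ^ q by linarith
  have e1 : q - 1 ≤ q := by linarith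
  refine nonneg_of_deriv_Ici (F := fun x : ℝ => 1 + q * x + q * (q - 1) / 2 * x ^ 2
      + q * (q - 1) * (q - 2) / 6 * x ^ 3 + x ^ q - (1 + x) ^ q)
    (F' := fun x => q + q * (q - 1) * x + q * (q - 1) * (q - 2) / 2 * x ^ 2
      + q * x ^ (q - 1) - q * (1 + x) ^ (q - 1)) ?_ ?_ ?_ ?_ ht
  · intro y _
    apply ContinuousAt.continuousWithinAt
    have ca : ContinuousAt (fun y : ℝ => y ^ q) y :=
      Real.continuousAt_rpow_const y q (Or.inr (by linarith))
    have cb : ContinuousAt (fun y : ℝ => (1 + y) ^ q) y := by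
      have h : ContinuousAt (fun z : ℝ => z ^ q) (1 + y) :=
        Real.continuousAt_rpow_const _ q (Or.inr (by linarith))
      exact h.comp (by fun_prop)
    exact ((((continuousAt_const.add (continuousAt_const.mul continuousAt_id)).add
      (continuousAt_const.mul (continuousAt_id.pow 2))).add
      (continuousAt_const.mul (continuousAt_id.pow 3))).add ca).sub cb
  · intro y _
    have d1 : HasDerivAt (fun y : ℝ => y ^ q) (q * y ^ (q - 1)) y :=
      Real.hasDerivAt_rpow_const (Or.inr (by linarith))
    have d2 : HasDerivAt (fun y : ℝ => (1 + y) ^ q) (1 * q * (1 + y) ^ (q - 1)) y :=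
      (myIdDeriv.const_add 1).rpow_const (Or.inr (by linarith))
    have hsq : HasDerivAt (fun y : ℝ => y ^ 2) (2 * y) y := by
      simpa using hasDerivAt_pow 2 y
    have hcu : HasDerivAt (fun y : ℝ => y ^ 3) (3 * y ^ 2) y := by
      simpa using hasDerivAt_pow 3 y
    have h := (((((hasDerivAt_const y (1:ℝ)).add (myIdDeriv.const_mul q)).add
      (hsq.const_mul (q * (q - 1) / 2))).add
      (hcu.const_mul (q * (q - 1) * (q - 2) / 6))).add d1).sub d2
    exact h.congr_deriv (by ring)
  · intro y hy
    exact stepA y (le_of_lt hy)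
  · simp [Real.zero_rpow (show q ≠ 0 by intro h; nlinarith), Real.one_rpow]

lemma lemN {q : ℝ} (hq3 : 3 ≤ q) (hq4 : q ≤ 4) {s : ℝ} (hs : s ∈ Set.Icc (0:ℝ) 1) :
    (1 - s) ^ q ≤ 1 - q * s + q * (q - 1) / 2 * s ^ 2 - q * (q - 1) * (q - 2) / 6 * s ^ 3
      + s ^ q := by
  have hq1 : (1:ℝ) ≤ q - 1 := by linarith
  have e21 : q - 1 - 1 = q - 2 := by ring
  have stepA : ∀ x ∈ Set.Icc (0:ℝ) 1,
      0 ≤ -q + q * (q - 1) * x - q * (q - 1) * (q - 2) / 2 * x ^ 2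
        + q * x ^ (q - 1) + q * (1 - x) ^ (q - 1) := by
    intro x hx
    refine nonneg_of_deriv_Icc (F := fun x : ℝ => -q + q * (q - 1) * x
        - q * (q - 1) * (q - 2) / 2 * x ^ 2 + q * x ^ (q - 1) + q * (1 - x) ^ (q - 1))
      (F' := fun x => q * (q - 1) - q * (q - 1) * (q - 2) * x
        + q * (q - 1) * x ^ (q - 2) - q * (q - 1) * (1 - x) ^ (q - 2)) ?_ ?_ ?_ ?_ hx
    · intro y _
      apply ContinuousAt.continuousWithinAt
      have ca : ContinuousAt (fun y : ℝ => y ^ (q - 1)) y :=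
        Real.continuousAt_rpow_const y (q - 1) (Or.inr (by linarith))
      have cb : ContinuousAt (fun y : ℝ => (1 - y) ^ (q - 1)) y := by
        have h : ContinuousAt (fun z : ℝ => z ^ (q - 1)) (1 - y) :=
          Real.continuousAt_rpow_const _ (q - 1) (Or.inr (by linarith))
        exact h.comp (by fun_prop)
      exact (((continuousAt_const.add (continuousAt_const.mul continuousAt_id)).sub
        (continuousAt_const.mul (continuousAt_id.pow 2))).add
        (continuousAt_const.mul ca)).add (continuousAt_const.mul cb)
    · intro y _
      have d1 : HasDerivAt (fun y : ℝ => y ^ (q - 1)) ((q - 1) * y ^ (q - 2)) y := by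
        have := Real.hasDerivAt_rpow_const (x := y) (p := q - 1) (Or.inr hq1)
        rwa [e21] at this
      have d2 : HasDerivAt (fun y : ℝ => (1 - y) ^ (q - 1))
          ((0 - 1) * (q - 1) * (1 - y) ^ (q - 2)) y := by
        have := ((hasDerivAt_const y (1:ℝ)).sub myIdDeriv).rpow_const (p := q - 1)
          (Or.inr hq1)
        rwa [e21] at this
      have hsq : HasDerivAt (fun y : ℝ => y ^ 2) (2 * y) y := by
        simpa using hasDerivAt_pow 2 y
      have h := ((((hasDerivAt_const y (-q)).add (myIdDeriv.const_mul (q * (q - 1)))).sub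
        (hsq.const_mul (q * (q - 1) * (q - 2) / 2))).add (d1.const_mul q)).add
        (d2.const_mul q)
      exact h.congr_deriv (by ring)
    · intro y hy
      have hB := lemB' (α := q - 2) (by linarith) (by linarith)
        (Set.mem_Icc.2 ⟨hy.1.le, hy.2.le⟩)
      have hqq : 0 ≤ q * (q - 1) := by nlinarith
      nlinarith [mul_nonneg hqq (sub_nonneg.2 hB)]
    · norm_num [Real.zero_rpow (show q - 1 ≠ 0 by intro h; nlinarith), Real.one_rpow]
  suffices h : 0 ≤ 1 - q * s + q * (q - 1) / 2 * s ^ 2 - q * (q - 1) * (q - 2) / 6 * s ^ 3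
      + s ^ q - (1 - s) ^ q by linarith
  refine nonneg_of_deriv_Icc (F := fun x : ℝ => 1 - q * x + q * (q - 1) / 2 * x ^ 2
      - q * (q - 1) * (q - 2) / 6 * x ^ 3 + x ^ q - (1 - x) ^ q)
    (F' := fun x => -q + q * (q - 1) * x - q * (q - 1) * (q - 2) / 2 * x ^ 2
      + q * x ^ (q - 1) + q * (1 - x) ^ (q - 1)) ?_ ?_ ?_ ?_ hs
  · intro y _
    apply ContinuousAt.continuousWithinAt
    have ca : ContinuousAt (fun y : ℝ => y ^ q) y :=
      Real.continuousAt_rpow_const y q (Or.inr (by linarith))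
    have cb : ContinuousAt (fun y : ℝ => (1 - y) ^ q) y := by
      have h : ContinuousAt (fun z : ℝ => z ^ q) (1 - y) :=
        Real.continuousAt_rpow_const _ q (Or.inr (by linarith))
      exact h.comp (by fun_prop)
    exact ((((continuousAt_const.sub (continuousAt_const.mul continuousAt_id)).add
      (continuousAt_const.mul (continuousAt_id.pow 2))).sub
      (continuousAt_const.mul (continuousAt_id.pow 3))).add ca).sub cb
  · intro y _
    have d1 : HasDerivAt (fun y : ℝ => y ^ q) (q * y ^ (q - 1)) y :=
      Real.hasDerivAt_rpow_const (Or.inr (by linarith))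
    have d2 : HasDerivAt (fun y : ℝ => (1 - y) ^ q) ((0 - 1) * q * (1 - y) ^ (q - 1)) y :=
      ((hasDerivAt_const y (1:ℝ)).sub myIdDeriv).rpow_const (Or.inr (by linarith))
    have hsq : HasDerivAt (fun y : ℝ => y ^ 2) (2 * y) y := by
      simpa using hasDerivAt_pow 2 y
    have hcu : HasDerivAt (fun y : ℝ => y ^ 3) (3 * y ^ 2) y := by
      simpa using hasDerivAt_pow 3 y
    have h := (((((hasDerivAt_const y (1:ℝ)).sub (myIdDeriv.const_mul q)).add
      (hsq.const_mul (q * (q - 1) / 2))).sub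
      (hcu.const_mul (q * (q - 1) * (q - 2) / 6))).add d1).sub d2
    exact h.congr_deriv (by ring)
  · intro y hy
    exact stepA y (Set.mem_Icc.2 ⟨hy.1.le, hy.2.le⟩)
  · norm_num [Real.zero_rpow (show q ≠ 0 by intro h; nlinarith), Real.one_rpow]

theorem rpow_le_taylor_q_three_four (q t : ℝ) (hq3 : 3 ≤ q) (hq4 : q ≤ 4)
    (ht : -1 ≤ t) :
    (1 + t) ^ q ≤ 1 + q * t + (1 / 2) * q * (q - 1) * t ^ 2
      + (1 / 6) * q * (q - 1) * (q - 2) * t ^ 3 + |t| ^ q := by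
  rcases le_or_gt 0 t with h | h
  · rw [abs_of_nonneg h]
    have := lemP hq3 hq4 h
    linarith
  · rw [abs_of_neg h]
    have hmem : -t ∈ Set.Icc (0:ℝ) 1 := ⟨by linarith, by linarith⟩
    have hN := lemN hq3 hq4 hmem
    rw [show (1:ℝ) - -t = 1 + t by ring] at hN
    have e2 : (-t) ^ 2 = t ^ 2 := by ring
    have e3 : (-t) ^ 3 = -t ^ 3 := by ring
    rw [e2, e3] at hN
    linarith
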